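/- Let q ∈ O_F[X] be a polynomial of degree ≥ 1 such that the image of q′ in K[X] is non-zero, and let A = 1 or A = 2. Then there exist finitely many b₁,…,b_m ∈ O_F such that for every b ∈ O_F, if the set {x ∈ O_F : q(x) ∈ b + t^A O_F and q̄′(x̄) = 0} is non-empty, then b ≡ b_i mod t^A O_F for some i ∈ {1,…,m}. -/

import Mathlib

noncomputable section

open Polynomial
open scoped Classical

/-- A Henselian discrete valuation field with residue field `K`:
`Fc` is the field, `O` its ring of integers, `t` a fixed prime element and `res` the
residue map.  The axioms say that `O` is a valuation subring of `Fc`, `t` is irreducible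
in `O`, `res` is surjective with kernel `tO`, the valuation is discrete (every nonzero
element is a unit of `O` times a power of `t`), and `O` is Henselian (simple roots of the
reduction of a monic polynomial lift). -/
structure HDVF (K : Type) [Field K] : Type 1 where
  Fc : Type
  fieldF : Field Fc
  O : Subring Fc
  t : Fc
  ht : t ∈ O
  res : O →+* K
  hval : ∀ x : Fc, x ∈ O ∨ x⁻¹ ∈ O
  hirr : Irreducible (⟨t, ht⟩ : O)
  hres_surj : Function.Surjective res
  hres_ker : ∀ x : O, res x = 0 ↔ (⟨t, ht⟩ : O) ∣ x
  hdisc : ∀ x : Fc, x ≠ 0 → ∃ (n : ℤ) (u : O), IsUnit u ∧ x = (u : Fc) * t ^ n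
  hensel : ∀ P : Polynomial O, P.Monic → ∀ α : K,
    Polynomial.eval α (P.map res) = 0 →
    Polynomial.eval α (Polynomial.derivative (P.map res)) ≠ 0 →
    ∃ a : O, Polynomial.eval a P = 0 ∧ res a = α

attribute [instance] HDVF.fieldF

namespace HDVF

variable {K : Type} [Field K] (E : HDVF K)

/-- The residue map, extended by zero outside the ring of integers. -/
def resF (x : E.Fc) : K := if h : x ∈ E.O then E.res ⟨x, h⟩ else 0

/-- The translated fractional ideal `a + t^c O`. -/
def tfi (a : E.Fc) (c : ℤ) : Set E.Fc := {y : E.Fc | ∃ z ∈ E.O, y = a + E.t ^ c * z}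

end HDVF

/-- Let q ∈ O_F[X] have degree ≥ 1 with the image of q′ in K[X]
non-zero, and let A = 1 or 2.  Then there are finitely many b₁, …, b_m ∈ O_F such that
whenever {x ∈ O_F : q(x) ∈ b + t^A O_F, q̄′(x̄) = 0} is non-empty, b ≡ bᵢ mod t^A O_F for
some i. -/
theorem statement8 {K : Type} [Field K] [Infinite K] (E : HDVF K)
    (q : Polynomial E.O) (hdeg : 1 ≤ q.natDegree)
    (hq' : (Polynomial.derivative q).map E.res ≠ 0)
    (A : ℤ) (hA : A = 1 ∨ A = 2) :
    ∃ (m : ℕ) (b : Fin m → E.O), ∀ b' : E.O,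
      ({x : E.Fc | x ∈ E.O ∧
          Polynomial.eval x (q.map E.O.subtype) ∈ E.tfi (b' : E.Fc) A ∧
          Polynomial.eval (E.resF x) (Polynomial.derivative (q.map E.res)) = 0}).Nonempty →
      ∃ i, (b' : E.Fc) ∈ E.tfi ((b i : E.Fc)) A := by

  classical
  obtain ⟨n, hn, rfl⟩ : ∃ n : ℕ, (n = 1 ∨ n = 2) ∧ A = (n : ℤ) := by
    rcases hA with h | h
    · exact ⟨1, Or.inl rfl, by simp [h]⟩
    · exact ⟨2, Or.inr rfl, by simp [h]⟩
  set τ : E.O := ⟨E.t, E.ht⟩ with hτ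
  set p : Polynomial K := (Polynomial.derivative q).map E.res with hp
  have hp0 : p ≠ 0 := hq'
  set S := p.roots.toFinset with hS
  set lift : Fin S.card → E.O := fun i =>
    Classical.choose (E.hres_surj ((S.equivFin.symm i : S) : K)) with hlift
  have hlift_res : ∀ i, E.res (lift i) = ((S.equivFin.symm i : S) : K) := fun i =>
    Classical.choose_spec (E.hres_surj ((S.equivFin.symm i : S) : K))
  refine ⟨S.card, fun i => Polynomial.eval (lift i) q, ?_⟩
  rintro b' ⟨x, hxO, hxval, hxroot⟩
  set x' : E.O := ⟨x, hxO⟩ with hx'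
  have hresF : E.resF x = E.res x' := by simp [HDVF.resF, hxO]; rfl
  have hroot : Polynomial.eval (E.res x') p = 0 := by
    have := hxroot
    rw [hresF, Polynomial.derivative_map] at this
    exact this
  have hmem : E.res x' ∈ S :=
    Multiset.mem_toFinset.mpr (Polynomial.mem_roots'.mpr ⟨hp0, hroot⟩)
  set i : Fin S.card := S.equivFin ⟨E.res x', hmem⟩ with hi
  have ha : E.res (lift i) = E.res x' := by
    rw [hlift_res i, hi, Equiv.symm_apply_apply]
  set a : E.O := lift i with haa
  -- τ divides x' - a
  have hdvd1 : τ ∣ (x' - a) := by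
    rw [← E.hres_ker]
    simp [ha]
  -- τ divides q'(a)
  have hdvd2 : τ ∣ Polynomial.eval a (Polynomial.derivative q) := by
    rw [← E.hres_ker]
    have : E.res (Polynomial.eval a (Polynomial.derivative q))
        = Polynomial.eval (E.res a) p := by
      rw [hp, Polynomial.eval_map, Polynomial.eval₂_hom]
    rw [this, ha, hroot]
  -- main divisibility
  have hkey : τ ^ n ∣ (Polynomial.eval x' q - Polynomial.eval a q) := by
    rcases hn with h1 | h2
    · rw [h1, pow_one]
      exact dvd_trans hdvd1 (Polynomial.sub_dvd_eval_sub x' a q)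
    · obtain ⟨k, hk⟩ := q.binomExpansion a (x' - a)
      have hx : a + (x' - a) = x' := by ring
      rw [hx] at hk
      rw [h2, hk]
      have : Polynomial.eval a q + Polynomial.eval a (Polynomial.derivative q) * (x' - a)
          + k * (x' - a) ^ 2 - Polynomial.eval a q
          = Polynomial.eval a (Polynomial.derivative q) * (x' - a) + k * (x' - a) ^ 2 := by
        ring
      rw [this]
      refine dvd_add ?_ ?_
      · rw [sq]
        exact mul_dvd_mul hdvd2 hdvd1
      · have : (x' - a) ^ 2 = (x' - a) * (x' - a) := sq _
        rw [sq, this]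
        exact Dvd.dvd.mul_left (mul_dvd_mul hdvd1 hdvd1) k
  obtain ⟨w, hw⟩ := hkey
  -- translate eval over Fc
  have heval : Polynomial.eval x (q.map E.O.subtype) = ((Polynomial.eval x' q : E.O) : E.Fc) := by
    have hx : x = E.O.subtype x' := rfl
    rw [hx, Polynomial.eval_map, Polynomial.eval₂_hom]
    rfl
  obtain ⟨z, hzO, hz⟩ := hxval
  rw [heval] at hz
  refine ⟨i, ((w : E.Fc) - z), sub_mem w.2 hzO, ?_⟩
  have htpow : E.t ^ (n : ℤ) = (E.t) ^ n := zpow_natCast _ _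
  have hwFc : ((Polynomial.eval x' q : E.O) : E.Fc)
      - ((Polynomial.eval a q : E.O) : E.Fc) = E.t ^ n * (w : E.Fc) := by
    have := congrArg (fun y : E.O => (y : E.Fc)) hw
    push_cast at this ⊢
    simpa [hτ] using this
  have hb' : (b' : E.Fc) = ((Polynomial.eval x' q : E.O) : E.Fc) - E.t ^ (n : ℤ) * z := by
    rw [hz]; ring
  rw [hb', htpow]
  have : ((Polynomial.eval x' q : E.O) : E.Fc) = ((Polynomial.eval a q : E.O) : E.Fc)
      + E.t ^ n * (w : E.Fc) := by
    rw [← hwFc]; ring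
  rw [this]
  ring
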